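/- In particular, the Heisenberg-type group G of type (d₁,…,d_p) has a unique irreducible weight-1 module up to isomorphism, and it has dimension d₁⋯d_p. -/

import Mathlib

abbrev ThetaK1 (p : ℕ) (d : Fin p → ℕ) : Type := ∀ i : Fin p, Multiplicative (ZMod (d i))

abbrev ThetaK2 (k : Type) [Field k] (p : ℕ) (d : Fin p → ℕ) : Type := ThetaK1 p d →* kˣ

def Heis (k : Type) [Field k] (p : ℕ) (d : Fin p → ℕ) : Type :=
  kˣ × ThetaK1 p d × ThetaK2 k p d

namespace Heis

variable {k : Type} [Field k] {p : ℕ} {d : Fin p → ℕ}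

def mk (α : kˣ) (x : ThetaK1 p d) (χ : ThetaK2 k p d) : Heis k p d := (α, x, χ)

instance : Mul (Heis k p d) :=
  ⟨fun a b => (a.1 * b.1 * b.2.2 a.2.1, a.2.1 * b.2.1, a.2.2 * b.2.2)⟩

instance : One (Heis k p d) := ⟨((1 : kˣ), 1, 1)⟩

instance : Inv (Heis k p d) := ⟨fun a => (a.1⁻¹ * a.2.2 a.2.1, a.2.1⁻¹, a.2.2⁻¹)⟩

theorem mul_def (a b : Heis k p d) :
    a * b = (a.1 * b.1 * b.2.2 a.2.1, a.2.1 * b.2.1, a.2.2 * b.2.2) := rfl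

theorem one_def : (1 : Heis k p d) = ((1 : kˣ), 1, 1) := rfl

theorem inv_def (a : Heis k p d) :
    a⁻¹ = (a.1⁻¹ * a.2.2 a.2.1, a.2.1⁻¹, a.2.2⁻¹) := rfl

theorem mul_assoc' (a b c : Heis k p d) : a * b * c = a * (b * c) := by
  obtain ⟨α, x, χ⟩ := a
  obtain ⟨β, y, ψ⟩ := b
  obtain ⟨γ, z, ω⟩ := c
  refine Prod.ext ?_ (Prod.ext ?_ ?_)
  · show α * β * ψ x * γ * (ω (x * y)) = α * (β * γ * ω y) * ((ψ * ω) x)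
    simp [map_mul, MonoidHom.mul_apply, mul_assoc, mul_comm, mul_left_comm]
  · exact mul_assoc x y z
  · exact mul_assoc χ ψ ω

theorem one_mul' (a : Heis k p d) : 1 * a = a := by
  obtain ⟨α, x, χ⟩ := a
  refine Prod.ext ?_ (Prod.ext ?_ ?_)
  · show 1 * α * χ 1 = α
    simp
  · exact one_mul x
  · exact one_mul χ

theorem mul_one' (a : Heis k p d) : a * 1 = a := by
  obtain ⟨α, x, χ⟩ := a
  refine Prod.ext ?_ (Prod.ext ?_ ?_)
  · show α * 1 * (1 : ThetaK2 k p d) x = α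
    simp
  · exact mul_one x
  · exact mul_one χ

theorem inv_mul_cancel' (a : Heis k p d) : a⁻¹ * a = 1 := by
  obtain ⟨α, x, χ⟩ := a
  refine Prod.ext ?_ (Prod.ext ?_ ?_)
  · show α⁻¹ * χ x * α * χ (x⁻¹) = 1
    simp [map_inv, mul_comm, mul_left_comm]
  · exact inv_mul_cancel x
  · exact inv_mul_cancel χ

instance : Group (Heis k p d) where
  mul_assoc := mul_assoc'
  one_mul := one_mul'
  mul_one := mul_one'
  inv_mul_cancel := inv_mul_cancel'

/-- The multiplication rule of the Heisenberg-type group. -/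
theorem mk_mul (α β : kˣ) (x y : ThetaK1 p d) (χ ψ : ThetaK2 k p d) :
    mk α x χ * mk β y ψ = mk (α * β * ψ x) (x * y) (χ * ψ) := rfl

end Heis

section Reps

variable {k : Type} [Field k]

/-- A subspace stable under a representation. -/
def RepStable {G V : Type} [Group G] [AddCommGroup V] [Module k V]
    (ρ : G →* (V →ₗ[k] V)ˣ) (W : Submodule k V) : Prop :=
  ∀ (g : G), ∀ w ∈ W, (ρ g : V →ₗ[k] V) w ∈ W

/-- Irreducibility: nonzero and no nontrivial stable subspace. -/
def RepIrred {G V : Type} [Group G] [AddCommGroup V] [Module k V]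
    (ρ : G →* (V →ₗ[k] V)ˣ) : Prop :=
  (∃ v : V, v ≠ 0) ∧
  ∀ W : Submodule k V, RepStable ρ W → W = ⊥ ∨ W = ⊤

/-- Isomorphism of representations of `G`. -/
def RepIso {G V W : Type} [Group G] [AddCommGroup V] [Module k V]
    [AddCommGroup W] [Module k W]
    (ρ : G →* (V →ₗ[k] V)ˣ) (τ : G →* (W →ₗ[k] W)ˣ) : Prop :=
  ∃ e : V ≃ₗ[k] W, ∀ (g : G) (v : V), e ((ρ g : V →ₗ[k] V) v) = (τ g : W →ₗ[k] W) (e v)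

variable {p : ℕ} {d : Fin p → ℕ}

/-- A representation of the Heisenberg-type group has weight `n` if `kˣ ⊆ G` acts through the
character `α ↦ αⁿ`. -/
def IsWeight (n : ℤ) {V : Type} [AddCommGroup V] [Module k V]
    (ρ : Heis k p d →* (V →ₗ[k] V)ˣ) : Prop :=
  ∀ (α : kˣ) (v : V), (ρ (Heis.mk α 1 1) : V →ₗ[k] V) v = ((α ^ n : kˣ) : k) • v

/-- `D n = (d₁⋯d_p)/(gcd(n,d₁)⋯gcd(n,d_p))`. -/
def ThetaD (p : ℕ) (d : Fin p → ℕ) (n : ℤ) : ℕ :=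
  (∏ i, d i) / ∏ i, Int.gcd n (d i)

end Reps

section Helpers

variable {k : Type} [Field k]

/-- Orthogonality: a nontrivial character sums to zero. -/
theorem sum_char_eq_zero {G : Type} [CommGroup G] [Fintype G] (χ : G →* kˣ) (hχ : χ ≠ 1) :
    ∑ a : G, ((χ a : kˣ) : k) = 0 := by
  obtain ⟨b, hb⟩ : ∃ b, χ b ≠ 1 := by
    by_contra h
    push_neg at h
    exact hχ (MonoidHom.ext fun a => by simp [h a])
  have h1 : ((χ b : kˣ) : k) * ∑ a : G, ((χ a : kˣ) : k) = ∑ a : G, ((χ a : kˣ) : k) := by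
    rw [Finset.mul_sum]
    refine Fintype.sum_equiv (Equiv.mulLeft b) _ _ fun a => ?_
    simp [map_mul]
  have h2 : (((χ b : kˣ) : k) - 1) * ∑ a : G, ((χ a : kˣ) : k) = 0 := by
    rw [sub_mul, one_mul, h1, sub_self]
  rcases mul_eq_zero.mp h2 with h | h
  · exact absurd (Units.ext (by simpa using sub_eq_zero.mp h)) hb
  · exact h

variable [IsAlgClosed k] {p : ℕ} {d : Fin p → ℕ}

theorem prod_d_ne_zero (hchar : ∀ i, ¬ (ringChar k ∣ d i)) :
    ((∏ i, d i : ℕ) : k) ≠ 0 := by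
  rw [Nat.cast_prod]
  refine Finset.prod_ne_zero_iff.mpr fun i _ => fun h => hchar i ?_
  exact (ringChar.spec k (d i)).mp h

theorem hasEnough (hd0 : ∀ i, 0 < d i) (hchar : ∀ i, ¬ (ringChar k ∣ d i)) :
    HasEnoughRootsOfUnity k (Monoid.exponent (ThetaK1 p d)) := by
  haveI : ∀ i, NeZero (d i) := fun i => ⟨(hd0 i).ne'⟩
  have hdvd : Monoid.exponent (ThetaK1 p d) ∣ ∏ i, d i := by
    have := Group.exponent_dvd_nat_card (G := ThetaK1 p d)
    have hcard : Nat.card (ThetaK1 p d) = ∏ i, d i := by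
      simp [Nat.card_pi, Nat.card_eq_fintype_card, ZMod.card]
    rwa [hcard] at this
  obtain ⟨c, hc⟩ := hdvd
  haveI : NeZero ((Monoid.exponent (ThetaK1 p d) : ℕ) : k) := by
    constructor
    intro h
    apply prod_d_ne_zero hchar
    rw [hc, Nat.cast_mul, h, zero_mul]
  infer_instance

theorem sep (hd0 : ∀ i, 0 < d i) (hchar : ∀ i, ¬ (ringChar k ∣ d i))
    {a : ThetaK1 p d} (ha : a ≠ 1) : ∃ χ : ThetaK2 k p d, χ a ≠ 1 := by
  haveI : ∀ i, NeZero (d i) := fun i => ⟨(hd0 i).ne'⟩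
  haveI := hasEnough hd0 hchar
  exact CommGroup.exists_apply_ne_one_of_hasEnoughRootsOfUnity (ThetaK1 p d) k ha

theorem dualEquiv (hd0 : ∀ i, 0 < d i) (hchar : ∀ i, ¬ (ringChar k ∣ d i)) :
    Nonempty (ThetaK2 k p d ≃* ThetaK1 p d) := by
  haveI : ∀ i, NeZero (d i) := fun i => ⟨(hd0 i).ne'⟩
  haveI := hasEnough hd0 hchar
  exact CommGroup.monoidHom_mulEquiv_of_hasEnoughRootsOfUnity (ThetaK1 p d) k

theorem card_K1 (hd0 : ∀ i, 0 < d i) :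
    haveI : ∀ i, NeZero (d i) := fun i => ⟨(hd0 i).ne'⟩
    Fintype.card (ThetaK1 p d) = ∏ i, d i := by
  haveI : ∀ i, NeZero (d i) := fun i => ⟨(hd0 i).ne'⟩
  simp [Fintype.card_pi, ZMod.card]

end Helpers

section Helpers2

variable {k : Type} [Field k] [IsAlgClosed k] {p : ℕ} {d : Fin p → ℕ}

/-- Evaluation at a point, as a character of the dual group. -/
def evalHom (a : ThetaK1 p d) : ThetaK2 k p d →* kˣ where
  toFun χ := χ a
  map_one' := rfl
  map_mul' χ ψ := rfl

theorem sum_dual_char_eq_zero [Fintype (ThetaK2 k p d)]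
    (hd0 : ∀ i, 0 < d i) (hchar : ∀ i, ¬ (ringChar k ∣ d i))
    {a : ThetaK1 p d} (ha : a ≠ 1) : ∑ χ : ThetaK2 k p d, ((χ a : kˣ) : k) = 0 := by
  have h := sum_char_eq_zero (k := k) (evalHom (k := k) a) (fun hc => ?_)
  · exact h
  · obtain ⟨χ, hχ⟩ := sep hd0 hchar ha
    exact hχ (by simpa [evalHom] using DFunLike.congr_fun hc χ)

/-- The underlying linear map of the model representation. -/
def mAct (g : Heis k p d) : (ThetaK1 p d → k) →ₗ[k] (ThetaK1 p d → k) where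
  toFun f := fun z => ((g.1 : kˣ) : k) * ((g.2.2 z : kˣ) : k) * f (z * g.2.1)
  map_add' f1 f2 := funext fun z => by simp [mul_add]
  map_smul' c f := funext fun z => by
    simp only [Pi.smul_apply, smul_eq_mul, RingHom.id_apply]
    ring

/-- The model representation as a map to endomorphisms. -/
def mHom : Heis k p d →* ((ThetaK1 p d → k) →ₗ[k] (ThetaK1 p d → k)) where
  toFun := mAct
  map_one' := LinearMap.ext fun f => funext fun z => by
    simp [mAct, Heis.one_def]
  map_mul' a b := LinearMap.ext fun f => funext fun z => by
    show ((((a*b).1 : kˣ)) : k) * (((a*b).2.2 z : kˣ) : k) * f (z * (a*b).2.1)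
      = ((a.1 : kˣ) : k) * ((a.2.2 z : kˣ) : k) *
        (((b.1 : kˣ) : k) * ((b.2.2 (z * a.2.1) : kˣ) : k) * f (z * a.2.1 * b.2.1))
    simp only [Heis.mul_def, Units.val_mul, MonoidHom.mul_apply, map_mul, mul_assoc]
    ring

/-- The model representation. -/
def mRep : Heis k p d →* ((ThetaK1 p d → k) →ₗ[k] (ThetaK1 p d → k))ˣ :=
  (mHom (k := k) (p := p) (d := d)).toHomUnits

theorem mRep_apply (g : Heis k p d) (f : ThetaK1 p d → k) (z : ThetaK1 p d) :
    ((mRep g : (ThetaK1 p d → k) →ₗ[k] (ThetaK1 p d → k))) f z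
      = ((g.1 : kˣ) : k) * ((g.2.2 z : kˣ) : k) * f (z * g.2.1) := rfl

theorem mRep_weight : IsWeight (k := k) (p := p) (d := d) 1 mRep := by
  intro α v
  funext z
  rw [mRep_apply]
  simp [Heis.mk]

end Helpers2

section Helpers3

variable {k : Type} [Field k] [IsAlgClosed k] {p : ℕ} {d : Fin p → ℕ}

theorem mRep_irred [∀ i, NeZero (d i)] [Fintype (ThetaK2 k p d)]
    (hd0 : ∀ i, 0 < d i) (hchar : ∀ i, ¬ (ringChar k ∣ d i)) :
    RepIrred (k := k) (mRep (k := k) (p := p) (d := d)) := by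
  classical
  constructor
  · exact ⟨fun _ => 1, fun h => one_ne_zero (congr_fun h 1)⟩
  intro W hW
  by_cases hbot : W = ⊥
  · exact Or.inl hbot
  right
  -- get a nonzero element of W
  obtain ⟨f, hfW, hf0⟩ := Submodule.exists_mem_ne_zero_of_ne_bot hbot
  obtain ⟨z₀, hz₀⟩ : ∃ z₀, f z₀ ≠ 0 := by
    by_contra h
    push_neg at h
    exact hf0 (funext h)
  -- the projection onto the delta function at z₀
  set s : ThetaK1 p d → k :=
    ∑ χ : ThetaK2 k p d, (((χ z₀)⁻¹ : kˣ) : k) •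
      ((mRep (Heis.mk 1 1 χ) : (ThetaK1 p d → k) →ₗ[k] (ThetaK1 p d → k)) f) with hs
  have hsW : s ∈ W := by
    refine Submodule.sum_mem _ fun χ _ => Submodule.smul_mem _ _ ?_
    exact hW (Heis.mk 1 1 χ) f hfW
  have hsval : s = ((Fintype.card (ThetaK2 k p d) : k) * f z₀) • (Pi.single z₀ (1 : k) : ThetaK1 p d → k) := by
    funext w
    have : s w = ∑ χ : ThetaK2 k p d, (((χ z₀)⁻¹ : kˣ) : k) * (((χ w : kˣ)) : k) * f w := by
      rw [hs]
      simp only [Finset.sum_apply, Pi.smul_apply, smul_eq_mul]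
      refine Finset.sum_congr rfl fun χ _ => ?_
      rw [mRep_apply]
      show (((χ z₀)⁻¹ : kˣ) : k) * ((1 : k) * ((χ w : kˣ) : k) * f (w * 1)) = _
      rw [mul_one, one_mul, mul_assoc]
    rw [this]
    by_cases hw : w = z₀
    · subst hw
      simp only [Pi.smul_apply, Pi.single_eq_same, smul_eq_mul, mul_one]
      rw [Finset.sum_congr rfl (fun χ _ => by
        rw [← Units.val_mul, inv_mul_cancel, Units.val_one, one_mul]), Finset.sum_const]
      simp [mul_comm]
    · have h0 : ∑ χ : ThetaK2 k p d, ((χ (z₀⁻¹ * w) : kˣ) : k) = 0 := by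
        refine sum_dual_char_eq_zero hd0 hchar fun hc => hw ?_
        have := congr_arg (fun t => z₀ * t) hc
        simpa [mul_assoc] using this
      have : ∑ χ : ThetaK2 k p d, (((χ z₀)⁻¹ : kˣ) : k) * (((χ w : kˣ)) : k) * f w
          = (∑ χ : ThetaK2 k p d, ((χ (z₀⁻¹ * w) : kˣ) : k)) * f w := by
        rw [Finset.sum_mul]
        refine Finset.sum_congr rfl fun χ _ => ?_
        rw [map_mul, map_inv, Units.val_mul]
      rw [this, h0, zero_mul]
      simp [Pi.single_apply, hw]
  -- the delta function at z₀ lies in W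
  have hcard0 : ((Fintype.card (ThetaK2 k p d) : k) * f z₀) ≠ 0 := by
    refine mul_ne_zero ?_ hz₀
    have : Fintype.card (ThetaK2 k p d) = ∏ i, d i := by
      rw [Fintype.card_congr (dualEquiv hd0 hchar).some.toEquiv, card_K1 hd0]
    rw [this]
    exact prod_d_ne_zero hchar
  have hδ : (Pi.single z₀ (1 : k) : ThetaK1 p d → k) ∈ W := by
    have := Submodule.smul_mem W ((Fintype.card (ThetaK2 k p d) : k) * f z₀)⁻¹ hsW
    rwa [hsval, smul_smul, inv_mul_cancel₀ hcard0, one_smul] at this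
  -- all delta functions lie in W
  have hδall : ∀ z : ThetaK1 p d, (Pi.single z (1 : k) : ThetaK1 p d → k) ∈ W := by
    intro z
    have h := hW (Heis.mk 1 (z⁻¹ * z₀) 1) _ hδ
    have hval : ((mRep (Heis.mk 1 (z⁻¹ * z₀) (1 : ThetaK2 k p d)) :
        (ThetaK1 p d → k) →ₗ[k] (ThetaK1 p d → k))) (Pi.single z₀ (1 : k))
        = (Pi.single z (1 : k) : ThetaK1 p d → k) := by
      funext w
      rw [mRep_apply]
      show ((1:kˣ):k) * (((1 : ThetaK2 k p d) w : kˣ):k) *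
        (Pi.single z₀ (1:k) : ThetaK1 p d → k) (w * (z⁻¹ * z₀)) = _
      rw [MonoidHom.one_apply, Units.val_one, one_mul, one_mul]
      rw [Pi.single_apply, Pi.single_apply]
      congr 1
      simp only [eq_iff_iff]
      constructor
      · intro hw
        have h2 : w * (z⁻¹ * z₀) = z * (z⁻¹ * z₀) := by rw [hw]; group
        exact mul_right_cancel h2
      · rintro rfl; group
    rwa [hval] at h
  -- conclude W = ⊤
  refine (Submodule.eq_top_iff').mpr fun g => ?_
  have : g = ∑ z : ThetaK1 p d, g z • (Pi.single z (1 : k) : ThetaK1 p d → k) := by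
    rw [Finset.sum_congr rfl (fun z _ => by rw [← Pi.single_smul, smul_eq_mul, mul_one])]
    exact (Finset.univ_sum_single g).symm
  rw [this]
  exact Submodule.sum_mem _ fun z _ => Submodule.smul_mem _ _ (hδall z)

end Helpers3

section Transport

variable {k : Type} [Field k] {G V W : Type} [Group G]
  [AddCommGroup V] [Module k V] [AddCommGroup W] [Module k W]

/-- Transport a representation along a linear equivalence. -/
def transportRep (e : V ≃ₗ[k] W) (ρ : G →* (V →ₗ[k] V)ˣ) : G →* (W →ₗ[k] W)ˣ :=
  MonoidHom.toHomUnits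
  { toFun := fun g => e.toLinearMap ∘ₗ (ρ g : V →ₗ[k] V) ∘ₗ e.symm.toLinearMap
    map_one' := by
      ext w
      simp
    map_mul' := fun g h => by
      ext w
      simp [Module.End.mul_apply] }

theorem transportRep_apply (e : V ≃ₗ[k] W) (ρ : G →* (V →ₗ[k] V)ˣ) (g : G) (w : W) :
    (transportRep e ρ g : W →ₗ[k] W) w = e ((ρ g : V →ₗ[k] V) (e.symm w)) := rfl

theorem transportRep_iso (e : V ≃ₗ[k] W) (ρ : G →* (V →ₗ[k] V)ˣ) :
    RepIso (k := k) ρ (transportRep e ρ) := by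
  refine ⟨e, fun g v => ?_⟩
  rw [transportRep_apply, e.symm_apply_apply]

theorem transportRep_irred (e : V ≃ₗ[k] W) (ρ : G →* (V →ₗ[k] V)ˣ)
    (h : RepIrred (k := k) ρ) : RepIrred (k := k) (transportRep e ρ) := by
  obtain ⟨⟨v, hv⟩, hmax⟩ := h
  constructor
  · refine ⟨e v, fun hev => hv ?_⟩
    have := congr_arg e.symm hev
    rwa [e.symm_apply_apply, map_zero] at this
  intro W' hW'
  have hstab : RepStable ρ (W'.comap e.toLinearMap) := by
    intro g w hw
    simp only [Submodule.mem_comap, LinearEquiv.coe_coe] at hw ⊢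
    have := hW' g (e w) hw
    rwa [transportRep_apply, e.symm_apply_apply] at this
  rcases hmax _ hstab with hb | ht
  · left
    rw [Submodule.eq_bot_iff] at hb ⊢
    intro x hx
    have hm : e.symm x ∈ W'.comap e.toLinearMap := by
      simp only [Submodule.mem_comap, LinearEquiv.coe_coe, e.apply_symm_apply]
      exact hx
    have := hb _ hm
    have := congr_arg e this
    rwa [e.apply_symm_apply, map_zero] at this
  · right
    rw [Submodule.eq_top_iff'] at ht ⊢
    intro x
    have := ht (e.symm x)
    simp only [Submodule.mem_comap, LinearEquiv.coe_coe, e.apply_symm_apply] at this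
    exact this

end Transport

section TransportW

variable {k : Type} [Field k] {p : ℕ} {d : Fin p → ℕ} {V W : Type}
  [AddCommGroup V] [Module k V] [AddCommGroup W] [Module k W]

theorem transportRep_weight (e : V ≃ₗ[k] W) (ρ : Heis k p d →* (V →ₗ[k] V)ˣ) (n : ℤ)
    (h : IsWeight n ρ) : IsWeight n (transportRep e ρ) := by
  intro α w
  rw [transportRep_apply, h α, map_smul, e.apply_symm_apply]

end TransportW

section Core

variable {k : Type} [Field k] [IsAlgClosed k] {p : ℕ} {d : Fin p → ℕ}

theorem exists_good_basis [∀ i, NeZero (d i)] [Fintype (ThetaK2 k p d)]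
    (hd0 : ∀ i, 0 < d i) (hchar : ∀ i, ¬ (ringChar k ∣ d i))
    {V : Type} [AddCommGroup V] [Module k V]
    (ρ : Heis k p d →* (V →ₗ[k] V)ˣ) (hw : IsWeight 1 ρ) (hirr : RepIrred ρ) :
    ∃ b : Module.Basis (ThetaK2 k p d) k V, ∀ (α : kˣ) (x : ThetaK1 p d) (χ' χ : ThetaK2 k p d),
      (ρ (Heis.mk α x χ') : V →ₗ[k] V) (b χ) = ((α * χ x : kˣ) : k) • b (χ' * χ) := by
  classical
  have hN : ((∏ i, d i : ℕ) : k) ≠ 0 := prod_d_ne_zero hchar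
  have Rmul : ∀ (g h : Heis k p d) (v : V),
      (ρ (g * h) : V →ₗ[k] V) v = (ρ g : V →ₗ[k] V) ((ρ h : V →ₗ[k] V) v) := by
    intro g h v
    rw [map_mul, Units.val_mul, Module.End.mul_apply]
  have Rone : ∀ v : V, (ρ 1 : V →ₗ[k] V) v = v := by
    intro v
    rw [map_one, Units.val_one, Module.End.one_apply]
  have mk111 : Heis.mk (1 : kˣ) (1 : ThetaK1 p d) (1 : ThetaK2 k p d) = 1 := rfl
  have decomp : ∀ (α : kˣ) (x : ThetaK1 p d) (χ' χ : ThetaK2 k p d),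
      Heis.mk α x χ' * Heis.mk 1 1 χ
        = Heis.mk (α * χ x) 1 1 * (Heis.mk 1 1 (χ' * χ) * Heis.mk 1 x 1) := by
    intro α x χ' χ
    simp [Heis.mk, Heis.mul_def, Prod.mk.injEq]
    exact Prod.ext (by show α * 1 * χ x = α * χ x * (1 * 1 * (1 : ThetaK2 k p d) 1) * (χ' * χ * 1) 1; simp)
      (Prod.ext (by show x * 1 = 1 * (1 * x); simp) (by show χ' * χ = 1 * (χ' * χ * 1); exact ((one_mul (χ' * χ * 1)).trans (mul_one (χ' * χ))).symm))
  have Rcomm : ∀ (α : kˣ) (x : ThetaK1 p d) (χ' χ : ThetaK2 k p d) (v : V),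
      (ρ (Heis.mk α x χ') : V →ₗ[k] V) ((ρ (Heis.mk 1 1 χ) : V →ₗ[k] V) v)
        = ((α * χ x : kˣ) : k) •
          (ρ (Heis.mk 1 1 (χ' * χ)) : V →ₗ[k] V) ((ρ (Heis.mk 1 x 1) : V →ₗ[k] V) v) := by
    intro α x χ' χ v
    rw [← Rmul, decomp, Rmul, Rmul, hw]
    simp
  have Tmul : ∀ (x y : ThetaK1 p d) (v : V),
      (ρ (Heis.mk 1 x 1) : V →ₗ[k] V) ((ρ (Heis.mk 1 y 1) : V →ₗ[k] V) v)
        = (ρ (Heis.mk 1 (x * y) 1) : V →ₗ[k] V) v := by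
    intro x y v
    rw [← Rmul]
    have h : Heis.mk (1:kˣ) x (1 : ThetaK2 k p d) * Heis.mk 1 y 1
        = Heis.mk 1 (x * y) (1 : ThetaK2 k p d) := by
      simp [Heis.mk, Heis.mul_def, Prod.mk.injEq]
      exact Prod.ext (by show (1 : kˣ) * 1 * (1 : ThetaK2 k p d) x = 1; simp)
        (Prod.ext (by show x * y = x * y; rfl) (by show (1 : ThetaK2 k p d) * 1 = 1; exact mul_one (1 : ThetaK2 k p d)))
    rw [h]
  -- find a nonzero vector fixed by all `mk 1 x 1`
  obtain ⟨v, hv⟩ := hirr.1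
  have key0 : ∑ ψ : ThetaK2 k p d, (∑ x : ThetaK1 p d,
        ((ψ x⁻¹ : kˣ) : k) • (ρ (Heis.mk 1 x 1) : V →ₗ[k] V) v)
      = ((∏ i, d i : ℕ) : k) • v := by
    rw [Finset.sum_comm]
    have hstep : ∀ x : ThetaK1 p d, (∑ ψ : ThetaK2 k p d,
          ((ψ x⁻¹ : kˣ) : k) • (ρ (Heis.mk 1 x 1) : V →ₗ[k] V) v)
        = (∑ ψ : ThetaK2 k p d, ((ψ x⁻¹ : kˣ) : k)) • (ρ (Heis.mk 1 x 1) : V →ₗ[k] V) v :=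
      fun x => (Finset.sum_smul).symm
    have h0 : ∀ x ∈ (Finset.univ : Finset (ThetaK1 p d)), x ≠ 1 →
        (∑ ψ : ThetaK2 k p d, ((ψ x⁻¹ : kˣ) : k)) • (ρ (Heis.mk 1 x 1) : V →ₗ[k] V) v = 0 := by
      intro x _ hx
      rw [sum_dual_char_eq_zero hd0 hchar (inv_ne_one.mpr hx), zero_smul]
    have h1 : (1 : ThetaK1 p d) ∉ (Finset.univ : Finset (ThetaK1 p d)) →
        (∑ ψ : ThetaK2 k p d, ((ψ (1 : ThetaK1 p d)⁻¹ : kˣ) : k)) •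
          (ρ (Heis.mk 1 1 1) : V →ₗ[k] V) v = 0 :=
      fun h => (h (Finset.mem_univ 1)).elim
    rw [Finset.sum_congr rfl (fun x _ => hstep x),
      Finset.sum_eq_single (1 : ThetaK1 p d) h0 h1]
    have hc : Fintype.card (ThetaK2 k p d) = ∏ i, d i := by
      rw [Fintype.card_congr (dualEquiv hd0 hchar).some.toEquiv, card_K1 hd0]
    have hs1 : ∑ ψ : ThetaK2 k p d, ((ψ (1 : ThetaK1 p d)⁻¹ : kˣ) : k)
        = ((∏ i, d i : ℕ) : k) := by
      simp [hc]
    rw [hs1, mk111, Rone]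
  -- pointwise facts about the dual group (stated concretely so that `rw` works)
  have hKone : ∀ χ : ThetaK2 k p d, (1 : ThetaK2 k p d) * χ = χ := fun χ => one_mul χ
  have hKinv : ∀ χ : ThetaK2 k p d, χ⁻¹ * χ = 1 := fun χ => inv_mul_cancel χ
  have hKinv' : ∀ χ : ThetaK2 k p d, χ * χ⁻¹ = 1 := fun χ => mul_inv_cancel χ
  have hc : Fintype.card (ThetaK2 k p d) = ∏ i, d i := by
    rw [Fintype.card_congr (dualEquiv hd0 hchar).some.toEquiv, card_K1 hd0]
  -- choose a simultaneous eigenvector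
  have hNv : ((∏ i, d i : ℕ) : k) • v ≠ 0 := smul_ne_zero hN hv
  obtain ⟨ψ, hψ⟩ : ∃ ψ : ThetaK2 k p d, (∑ x : ThetaK1 p d,
      ((ψ x⁻¹ : kˣ) : k) • (ρ (Heis.mk 1 x 1) : V →ₗ[k] V) v) ≠ 0 := by
    by_contra h
    push_neg at h
    rw [Finset.sum_congr rfl (fun ψ _ => h ψ), Finset.sum_const, smul_zero] at key0
    exact hNv key0.symm
  set w : V := ∑ x : ThetaK1 p d, ((ψ x⁻¹ : kˣ) : k) • (ρ (Heis.mk 1 x 1) : V →ₗ[k] V) v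
    with hw_def
  have hweig : ∀ y : ThetaK1 p d,
      (ρ (Heis.mk 1 y 1) : V →ₗ[k] V) w = ((ψ y : kˣ) : k) • w := by
    intro y
    rw [hw_def, map_sum, Finset.smul_sum]
    refine Fintype.sum_equiv (Equiv.mulLeft y) _ _ fun x => ?_
    simp only [Equiv.coe_mulLeft]
    rw [map_smul, Tmul, smul_smul, ← Units.val_mul, ← map_mul,
      show y * (y * x)⁻¹ = x⁻¹ by rw [mul_inv_rev, mul_comm x⁻¹ y⁻¹, ← mul_assoc, mul_inv_cancel, one_mul]]
  set w₀ : V := (ρ (Heis.mk 1 1 ψ⁻¹) : V →ₗ[k] V) w with hw0_def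
  have hfix : ∀ y, (ρ (Heis.mk 1 y 1) : V →ₗ[k] V) w₀ = w₀ := by
    intro y
    rw [hw0_def, Rcomm 1 y 1 ψ⁻¹ w, hweig y, map_smul, hKone, smul_smul, ← Units.val_mul]
    rw [show (1 : kˣ) * ψ⁻¹ y * ψ y = 1 by
      rw [one_mul, ← MonoidHom.mul_apply, hKinv, MonoidHom.one_apply]]
    rw [Units.val_one, one_smul]
  have hw₀ : w₀ ≠ 0 := by
    intro h0
    have h1 := Rcomm 1 1 ψ ψ⁻¹ w
    rw [← hw0_def, h0, map_zero, hKinv', mk111, Rone, Rone] at h1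
    rw [show ((1 * ψ⁻¹ 1 : kˣ) : k) = 1 by simp] at h1
    rw [one_smul] at h1
    exact hψ h1.symm
  set u : ThetaK2 k p d → V := fun χ => (ρ (Heis.mk 1 1 χ) : V →ₗ[k] V) w₀ with hu_def
  have hact : ∀ (α : kˣ) (x : ThetaK1 p d) (χ' χ : ThetaK2 k p d),
      (ρ (Heis.mk α x χ') : V →ₗ[k] V) (u χ) = ((α * χ x : kˣ) : k) • u (χ' * χ) := by
    intro α x χ' χ
    simp only [hu_def]
    rw [Rcomm, hfix]
  have hu1 : u 1 = w₀ := by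
    simp only [hu_def]
    rw [mk111, Rone]
  have hu0 : ∀ χ, u χ ≠ 0 := by
    intro χ h0
    have h1 := hact 1 1 χ⁻¹ χ
    rw [h0, map_zero, hKinv, hu1] at h1
    have h2 : ((1 * χ 1 : kˣ) : k) ≠ 0 := Units.ne_zero _
    rcases smul_eq_zero.mp h1.symm with h | h
    · exact h2 h
    · exact hw₀ h
  have hup : ∀ (x : ThetaK1 p d) (χ : ThetaK2 k p d),
      (ρ (Heis.mk 1 x 1) : V →ₗ[k] V) (u χ) = ((χ x : kˣ) : k) • u χ := by
    intro x χ
    have h1 := hact 1 x 1 χ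
    rwa [hKone, show ((1 * χ x : kˣ) : k) = ((χ x : kˣ) : k) by rw [one_mul]] at h1
  -- linear independence
  have hli : LinearIndependent k u := by
    rw [Fintype.linearIndependent_iff]
    intro c hcc ψ'
    have hz : ∑ x : ThetaK1 p d, ((ψ' x⁻¹ : kˣ) : k) •
        (ρ (Heis.mk 1 x 1) : V →ₗ[k] V) (∑ χ : ThetaK2 k p d, c χ • u χ) = 0 := by
      rw [hcc]
      simp
    have e1 : ∀ x : ThetaK1 p d, ((ψ' x⁻¹ : kˣ) : k) •
        (ρ (Heis.mk 1 x 1) : V →ₗ[k] V) (∑ χ : ThetaK2 k p d, c χ • u χ)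
        = ∑ χ : ThetaK2 k p d, (((ψ' x⁻¹ : kˣ) : k) * (c χ * ((χ x : kˣ) : k))) • u χ := by
      intro x
      rw [map_sum, Finset.smul_sum]
      refine Finset.sum_congr rfl fun χ _ => ?_
      rw [map_smul, hup, smul_smul, smul_smul, mul_assoc]
    rw [Finset.sum_congr rfl (fun x _ => e1 x), Finset.sum_comm] at hz
    have e2 : ∀ χ : ThetaK2 k p d,
        ∑ x : ThetaK1 p d, (((ψ' x⁻¹ : kˣ) : k) * (c χ * ((χ x : kˣ) : k))) • u χ
        = (c χ * ∑ x : ThetaK1 p d, (((χ * ψ'⁻¹) x : kˣ) : k)) • u χ := by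
      intro χ
      rw [Finset.mul_sum, Finset.sum_smul]
      refine Finset.sum_congr rfl fun x _ => ?_
      congr 1
      have happ : ((χ * ψ'⁻¹) x : kˣ) = χ x * (ψ' x)⁻¹ := rfl
      rw [happ, map_inv, Units.val_mul]
      ring
    rw [Finset.sum_congr rfl (fun χ _ => e2 χ)] at hz
    rw [Finset.sum_eq_single ψ' (fun χ _ hne => by
        rw [sum_char_eq_zero (χ * ψ'⁻¹) (fun h => hne (mul_inv_eq_one.mp h)), mul_zero,
          zero_smul])
      (fun h => (h (Finset.mem_univ ψ')).elim)] at hz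
    have e3 : ∑ x : ThetaK1 p d, (((ψ' * ψ'⁻¹) x : kˣ) : k) = ((∏ i, d i : ℕ) : k) := by
      rw [Finset.sum_congr rfl (fun x _ => by rw [hKinv' ψ', MonoidHom.one_apply, Units.val_one]),
        Finset.sum_const, Finset.card_univ, card_K1 hd0]
      simp
    rw [e3] at hz
    rcases mul_eq_zero.mp (by
        rcases smul_eq_zero.mp hz with h | h
        · exact h
        · exact absurd h (hu0 ψ')) with h | h
    · exact h
    · exact absurd h hN
  -- spanning
  have hsp : ⊤ ≤ Submodule.span k (Set.range u) := by
    have hstab : RepStable ρ (Submodule.span k (Set.range u)) := by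
      intro g wv hwv
      induction hwv using Submodule.span_induction with
      | mem y hy =>
        obtain ⟨χ, rfl⟩ := hy
        have h := hact g.1 g.2.1 g.2.2 χ
        rw [show (g : Heis k p d) = Heis.mk g.1 g.2.1 g.2.2 from rfl, h]
        exact Submodule.smul_mem _ _ (Submodule.subset_span ⟨_, rfl⟩)
      | zero => rw [map_zero]; exact Submodule.zero_mem _
      | add y z _ _ hy hz => rw [map_add]; exact Submodule.add_mem _ hy hz
      | smul a y _ hy => rw [map_smul]; exact Submodule.smul_mem _ _ hy
    rcases hirr.2 _ hstab with h | h
    · exfalso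
      apply hu0 1
      have : u 1 ∈ Submodule.span k (Set.range u) := Submodule.subset_span ⟨1, rfl⟩
      rwa [h, Submodule.mem_bot] at this
    · rw [h]
  refine ⟨Module.Basis.mk hli hsp, fun α x χ' χ => ?_⟩
  rw [Module.Basis.mk_apply, Module.Basis.mk_apply]
  exact hact α x χ' χ

end Core


/-- The Heisenberg-type group `G` of type `(d₁,…,d_p)` has a unique irreducible
weight-1 module up to isomorphism, and it has dimension `d₁⋯d_p`. -/
theorem stmt9 {k : Type} [Field k] [IsAlgClosed k] {p : ℕ} {d : Fin p → ℕ}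
    (hd0 : ∀ i, 0 < d i) (hchain : ∀ i j : Fin p, i ≤ j → d i ∣ d j)
    (hchar : ∀ i, ¬ (ringChar k ∣ d i)) :
    -- existence of an irreducible weight-1 module
    (∃ ρ : Heis k p d →* ((Fin (∏ i, d i) → k) →ₗ[k] (Fin (∏ i, d i) → k))ˣ,
      IsWeight 1 ρ ∧ RepIrred ρ) ∧
    -- uniqueness up to isomorphism
    (∀ (V : Type) [AddCommGroup V] [Module k V] [FiniteDimensional k V]
      (W : Type) [AddCommGroup W] [Module k W] [FiniteDimensional k W]
      (ρ : Heis k p d →* (V →ₗ[k] V)ˣ) (τ : Heis k p d →* (W →ₗ[k] W)ˣ),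
      IsWeight 1 ρ → RepIrred ρ → IsWeight 1 τ → RepIrred τ → RepIso ρ τ) ∧
    -- every irreducible weight-1 module has dimension d₁⋯d_p
    (∀ (V : Type) [AddCommGroup V] [Module k V] [FiniteDimensional k V]
      (ρ : Heis k p d →* (V →ₗ[k] V)ˣ),
      IsWeight 1 ρ → RepIrred ρ → Module.finrank k V = ∏ i, d i) := by
    classical
  haveI : ∀ i, NeZero (d i) := fun i => ⟨(hd0 i).ne'⟩
  haveI : Finite (ThetaK2 k p d) :=
    Finite.of_equiv _ (dualEquiv (k := k) hd0 hchar).some.symm.toEquiv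
  haveI : Fintype (ThetaK2 k p d) := Fintype.ofFinite _
  have hcardK2 : Fintype.card (ThetaK2 k p d) = ∏ i, d i := by
    rw [Fintype.card_congr (dualEquiv hd0 hchar).some.toEquiv, card_K1 hd0]
  refine ⟨?_, ?_, ?_⟩
  · -- existence
    have hcard : Fintype.card (ThetaK1 p d) = ∏ i, d i := card_K1 hd0
    let e : (ThetaK1 p d → k) ≃ₗ[k] (Fin (∏ i, d i) → k) :=
      LinearEquiv.funCongrLeft k k ((Fintype.equivFinOfCardEq hcard).symm)
    exact ⟨transportRep e mRep, transportRep_weight e mRep 1 mRep_weight,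
      transportRep_irred e mRep (mRep_irred hd0 hchar)⟩
  · -- uniqueness
    intro V _ _ _ W _ _ _ ρ τ hwρ hirρ hwτ hirτ
    obtain ⟨bV, hbV⟩ := exists_good_basis hd0 hchar ρ hwρ hirρ
    obtain ⟨bW, hbW⟩ := exists_good_basis hd0 hchar τ hwτ hirτ
    refine ⟨bV.equiv bW (Equiv.refl _), fun g v => ?_⟩
    have hlin : (bV.equiv bW (Equiv.refl _) : V ≃ₗ[k] W).toLinearMap.comp (ρ g : V →ₗ[k] V)
        = (τ g : W →ₗ[k] W).comp (bV.equiv bW (Equiv.refl _) : V ≃ₗ[k] W).toLinearMap := by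
      refine bV.ext fun χ => ?_
      simp only [LinearMap.comp_apply, LinearEquiv.coe_coe]
      rw [show (g : Heis k p d) = Heis.mk g.1 g.2.1 g.2.2 from rfl,
        hbV g.1 g.2.1 g.2.2 χ, map_smul, Module.Basis.equiv_apply, Module.Basis.equiv_apply,
        Equiv.refl_apply, Equiv.refl_apply, hbW g.1 g.2.1 g.2.2 χ]
    have h := LinearMap.congr_fun hlin v
    simpa using h
  · -- dimension
    intro V _ _ _ ρ hwρ hirρ
    obtain ⟨bV, _⟩ := exists_good_basis hd0 hchar ρ hwρ hirρ
    rw [Module.finrank_eq_card_basis bV, hcardK2]
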